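/- Let g_{rs}^j, g_{rs}^k be antisymmetric holomorphic functions on overlapping charts related by a biholomorphic Poisson transition z_j = f(z_k, t) depending holomorphically on a parameter t, so that g^j_{αβ}(f(z_k,t),t) = Σ_{r,s} g^k_{rs}(z_k,t) (∂f^α/∂z_k^r)(∂f^β/∂z_k^s). Then differentiating in t yields the cocycle relation: λ_k − λ_j + [Λ_t, θ] = 0, where λ_j = Σ (∂g^j_{αβ}/∂t) ∂/∂z_j^α ∧ ∂/∂z_j^β, λ_k = Σ (∂g^k_{rs}/∂t) ∂/∂z_k^r ∧ ∂/∂z_k^s, Λ_t = Σ g^j_{rs} ∂/∂z_j^r ∧ ∂/∂z_j^s, and θ = Σ_α (∂f^α/∂t) ∂/∂z_j^α. -/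

import Mathlib

/- STATEMENT 3: (Proposition 3.3, key computation.)  If two charts carry antisymmetric
holomorphic Poisson coefficients g^j, g^k related by a t-dependent biholomorphic Poisson
transition z_j = f(z_k,t) (with inverse e), then differentiating the compatibility relation
in t yields the cocycle relation λ_k − λ_j + [Λ_t, θ] = 0, written in coefficients (for all
a,b, at every point w = z_j and parameter t):
  Σ_{r,s} ∂_t g^k_{rs} ∂f^a/∂z_k^r ∂f^b/∂z_k^s − ∂_t g^j_{ab}
    − Σ_c ∂g^j_{ab}/∂z_j^c · θ^c + Σ_c (g^j_{cb} ∂_{z_j^c} θ^a + g^j_{ac} ∂_{z_j^c} θ^b) = 0,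
where θ^a(w,t) = (∂f^a/∂t)(e(w,t),t).  This is the coefficient form of the vector/bivector
identity, using the coordinate formula for the Schouten bracket [Λ,θ]. -/

open scoped BigOperators

/-- holomorphic partial derivative ∂/∂z_l on ℂⁿ -/
noncomputable def pd {n : ℕ} (l : Fin n) (f : (Fin n → ℂ) → ℂ) : (Fin n → ℂ) → ℂ :=
  fun z => fderiv ℂ f z (Pi.single l 1)

section Helpers

variable {n : ℕ}

private lemma single_decomp (v : Fin n → ℂ) :
    v = ∑ c, (v c) • (Pi.single c (1:ℂ) : Fin n → ℂ) := by
  funext x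
  rw [Finset.sum_apply]
  simp [Pi.single_apply, Finset.sum_ite_eq', mul_comm]

private lemma hasDerivAt_slice (G : (Fin n → ℂ) × ℂ → ℂ) (w : Fin n → ℂ) (t : ℂ)
    (hG : DifferentiableAt ℂ G (w, t)) :
    HasDerivAt (fun τ => G (w, τ)) (fderiv ℂ G (w, t) (0, 1)) t := by
  have h1 : HasDerivAt (fun τ : ℂ => ((w, τ) : (Fin n → ℂ) × ℂ)) (0, 1) t :=
    (hasDerivAt_const t w).prodMk (hasDerivAt_id t)
  exact hG.hasFDerivAt.comp_hasDerivAt t h1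

private lemma pd_slice (G : (Fin n → ℂ) × ℂ → ℂ) (c : Fin n) (w : Fin n → ℂ) (t : ℂ)
    (hG : DifferentiableAt ℂ G (w, t)) :
    pd c (fun z => G (z, t)) w = fderiv ℂ G (w, t) (Pi.single c 1, 0) := by
  have h1 : HasFDerivAt (fun z : Fin n → ℂ => ((z, t) : (Fin n → ℂ) × ℂ))
      (ContinuousLinearMap.inl ℂ (Fin n → ℂ) ℂ) w :=
    (hasFDerivAt_id w).prodMk (hasFDerivAt_const t w)
  have h2 : HasFDerivAt (fun z : Fin n → ℂ => G (z, t))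
      ((fderiv ℂ G (w, t)).comp (ContinuousLinearMap.inl ℂ (Fin n → ℂ) ℂ)) w :=
    hG.hasFDerivAt.comp w h1
  show fderiv ℂ (fun z : Fin n → ℂ => G (z, t)) w (Pi.single c 1) = _
  rw [h2.fderiv]
  rfl

private lemma clm_decomp (L : ((Fin n → ℂ) × ℂ) →L[ℂ] ℂ) (v : Fin n → ℂ) (s : ℂ) :
    L (v, s) = s * L (0, 1) + ∑ c, v c * L (Pi.single c 1, 0) := by
  have hv : ((v, s) : (Fin n → ℂ) × ℂ)
      = s • (((0 : Fin n → ℂ), (1:ℂ)) : (Fin n → ℂ) × ℂ)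
        + ∑ c, (v c) • ((((Pi.single c 1 : Fin n → ℂ)), (0:ℂ)) : (Fin n → ℂ) × ℂ) := by
    rw [Prod.ext_iff]
    constructor
    · simp only [Prod.fst_add, Prod.fst_sum, Prod.smul_mk, smul_zero, Prod.smul_fst]
      rw [zero_add]
      exact single_decomp v
    · simp [Prod.snd_sum]
  rw [hv, map_add, map_smul, map_sum, smul_eq_mul]
  congr 1
  exact Finset.sum_congr rfl fun c _ => by rw [map_smul, smul_eq_mul]

private lemma fderiv_decomp (φ : (Fin n → ℂ) → ℂ) (u : Fin n → ℂ) (v : Fin n → ℂ) :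
    fderiv ℂ φ u v = ∑ c, v c * pd c φ u := by
  conv_lhs => rw [single_decomp v]
  rw [map_sum]
  exact Finset.sum_congr rfl fun c _ => by rw [map_smul, smul_eq_mul]; rfl

private lemma pd_comp (φ : (Fin n → ℂ) → ℂ) (h : (Fin n → ℂ) → (Fin n → ℂ))
    (x0 : Fin n → ℂ) (l : Fin n)
    (hφ : DifferentiableAt ℂ φ (h x0)) (hh : DifferentiableAt ℂ h x0) :
    pd l (fun x => φ (h x)) x0 = ∑ i, pd l (fun x => h x i) x0 * pd i φ (h x0) := by
  have hc : HasFDerivAt (fun x => φ (h x))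
      ((fderiv ℂ φ (h x0)).comp (fderiv ℂ h x0)) x0 :=
    hφ.hasFDerivAt.comp x0 hh.hasFDerivAt
  have hcomp : ∀ j, DifferentiableAt ℂ (fun x => h x j) x0 := fun j =>
    differentiableAt_pi.1 hh j
  have hpi : fderiv ℂ h x0
      = ContinuousLinearMap.pi fun j => fderiv ℂ (fun x => h x j) x0 := fderiv_pi hcomp
  have e1 : pd l (fun x => φ (h x)) x0
      = fderiv ℂ φ (h x0) ((fderiv ℂ h x0) (Pi.single l 1)) := by
    show fderiv ℂ (fun x => φ (h x)) x0 (Pi.single l 1) = _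
    rw [hc.fderiv]
    rfl
  rw [e1, fderiv_decomp φ (h x0) ((fderiv ℂ h x0) (Pi.single l 1))]
  refine Finset.sum_congr rfl fun i _ => ?_
  congr 1
  rw [hpi]
  rfl

private lemma contDiff_fderiv_apply (G : (Fin n → ℂ) × ℂ → ℂ) (hG : ContDiff ℂ ⊤ G)
    (q : (Fin n → ℂ) × ℂ) :
    ContDiff ℂ ⊤ (fun x => fderiv ℂ G x q) :=
  (hG.fderiv_right le_top).clm_apply contDiff_const

private lemma fderiv_fderiv_apply (G : (Fin n → ℂ) × ℂ → ℂ) (hG : ContDiff ℂ ⊤ G)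
    (x : (Fin n → ℂ) × ℂ) (u v : (Fin n → ℂ) × ℂ) :
    fderiv ℂ (fun y => fderiv ℂ G y u) x v = fderiv ℂ (fderiv ℂ G) x v u := by
  have hd : DifferentiableAt ℂ (fderiv ℂ G) x :=
    ((hG.fderiv_right (m := ⊤) le_top).differentiable (by simp)) x
  have h : HasFDerivAt (fun y => fderiv ℂ G y u)
      ((ContinuousLinearMap.apply ℂ ℂ u).comp (fderiv ℂ (fderiv ℂ G) x)) x :=
    (ContinuousLinearMap.apply ℂ ℂ u).hasFDerivAt.comp x hd.hasFDerivAt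
  rw [h.fderiv]
  rfl

private lemma snd_deriv_symm (G : (Fin n → ℂ) × ℂ → ℂ) (hG : ContDiff ℂ ⊤ G)
    (x : (Fin n → ℂ) × ℂ) (u v : (Fin n → ℂ) × ℂ) :
    fderiv ℂ (fun y => fderiv ℂ G y u) x v = fderiv ℂ (fun y => fderiv ℂ G y v) x u := by
  have hsym : IsSymmSndFDerivAt ℂ G x := (hG.contDiffAt).isSymmSndFDerivAt le_top
  rw [fderiv_fderiv_apply G hG x u v, fderiv_fderiv_apply G hG x v u]
  exact hsym v u

private lemma sums_alg (g C Ej : Fin n → Fin n → ℂ) (B M : Fin n → ℂ)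
    (hCE : ∀ r r', ∑ c, C c r * Ej c r' = if r' = r then 1 else 0) :
    ∑ c, (∑ r, ∑ s, g r s * C c r * B s) * (∑ r', Ej c r' * M r')
      = ∑ r, ∑ s, g r s * M r * B s := by
  have expand : ∀ c, (∑ r, ∑ s, g r s * C c r * B s) * (∑ r', Ej c r' * M r')
      = ∑ r, ∑ s, ∑ r', g r s * C c r * B s * (Ej c r' * M r') := by
    intro c
    rw [Finset.sum_mul]
    refine Finset.sum_congr rfl fun r _ => ?_
    rw [Finset.sum_mul]
    refine Finset.sum_congr rfl fun s _ => ?_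
    rw [Finset.mul_sum]
  simp only [expand]
  rw [Finset.sum_comm]
  refine Finset.sum_congr rfl fun r _ => ?_
  rw [Finset.sum_comm]
  refine Finset.sum_congr rfl fun s _ => ?_
  rw [Finset.sum_comm]
  have h1 : ∀ r', ∑ c, g r s * C c r * B s * (Ej c r' * M r')
      = (g r s * B s * M r') * ∑ c, C c r * Ej c r' := by
    intro r'
    rw [Finset.mul_sum]
    exact Finset.sum_congr rfl fun c _ => by ring
  simp only [h1, hCE, mul_ite, mul_one, mul_zero, Finset.sum_ite_eq', Finset.mem_univ,
    if_true]
  ring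

private lemma sums_alg₂ (g C Ej : Fin n → Fin n → ℂ) (A N : Fin n → ℂ)
    (hCE : ∀ s s', ∑ c, C c s * Ej c s' = if s' = s then 1 else 0) :
    ∑ c, (∑ r, ∑ s, g r s * A r * C c s) * (∑ s', Ej c s' * N s')
      = ∑ r, ∑ s, g r s * A r * N s := by
  have key := sums_alg (fun s r => g r s) C Ej A N hCE
  have l1 : ∀ c, (∑ r, ∑ s, g r s * A r * C c s)
      = ∑ s, ∑ r, (fun s r => g r s) s r * C c s * A r := by
    intro c
    rw [Finset.sum_comm]
    exact Finset.sum_congr rfl fun s _ => Finset.sum_congr rfl fun r _ => by ring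
  have l2 : (∑ r, ∑ s, g r s * A r * N s)
      = ∑ s, ∑ r, (fun s r => g r s) s r * N s * A r := by
    rw [Finset.sum_comm]
    exact Finset.sum_congr rfl fun s _ => Finset.sum_congr rfl fun r _ => by ring
  rw [l2, ← key]
  exact Finset.sum_congr rfl fun c _ => by rw [l1 c]

end Helpers

theorem infinitesimal_poisson_deformation_cocycle {n : ℕ}
    (gj gk : Fin n → Fin n → (Fin n → ℂ) → ℂ → ℂ)
    (f e : (Fin n → ℂ) → ℂ → (Fin n → ℂ))
    (hgj : ∀ a b, ContDiff ℂ ⊤ (fun p : (Fin n → ℂ) × ℂ => gj a b p.1 p.2))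
    (hgk : ∀ a b, ContDiff ℂ ⊤ (fun p : (Fin n → ℂ) × ℂ => gk a b p.1 p.2))
    (hf : ∀ a, ContDiff ℂ ⊤ (fun p : (Fin n → ℂ) × ℂ => f p.1 p.2 a))
    (he : ∀ a, ContDiff ℂ ⊤ (fun p : (Fin n → ℂ) × ℂ => e p.1 p.2 a))
    (hantij : ∀ a b z t, gj a b z t = - gj b a z t)
    (hantik : ∀ a b z t, gk a b z t = - gk b a z t)
    (hinv₁ : ∀ z t, e (f z t) t = z)
    (hinv₂ : ∀ w t, f (e w t) t = w)
    -- f is a Poisson map for each t: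
    (hPoisson : ∀ α β : Fin n, ∀ z : Fin n → ℂ, ∀ t : ℂ,
      gj α β (f z t) t
        = ∑ r, ∑ s, gk r s z t * pd r (fun w => f w t α) z * pd s (fun w => f w t β) z) :
    ∀ a b : Fin n, ∀ w : Fin n → ℂ, ∀ t : ℂ,
      (∑ r, ∑ s, deriv (fun τ => gk r s (e w t) τ) t
          * pd r (fun z => f z t a) (e w t) * pd s (fun z => f z t b) (e w t))
      - deriv (fun τ => gj a b w τ) t
      - (∑ c, pd c (fun z => gj a b z t) w * deriv (fun τ => f (e w t) τ c) t)
      + (∑ c, (gj c b w t * pd c (fun w' => deriv (fun τ => f (e w' t) τ a) t) w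
            + gj a c w t * pd c (fun w' => deriv (fun τ => f (e w' t) τ b) t) w)) = 0 := by
  intro a b w t
  set z0 := e w t with hz0
  set F : Fin n → (Fin n → ℂ) × ℂ → ℂ := fun c p => f p.1 p.2 c with hFdef
  set Gj : (Fin n → ℂ) × ℂ → ℂ := fun p => gj a b p.1 p.2 with hGjdef
  set Gk : Fin n → Fin n → (Fin n → ℂ) × ℂ → ℂ := fun r s p => gk r s p.1 p.2 with hGkdef
  have hFc : ∀ c, ContDiff ℂ ⊤ (F c) := hf
  have hGjc : ContDiff ℂ ⊤ Gj := hgj a b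
  have hGkc : ∀ r s, ContDiff ℂ ⊤ (Gk r s) := hgk
  have dF : ∀ c p, DifferentiableAt ℂ (F c) p := fun c p => ((hFc c).differentiable (by simp)) p
  have dGj : ∀ p, DifferentiableAt ℂ Gj p := fun p => (hGjc.differentiable (by simp)) p
  have dGk : ∀ r s p, DifferentiableAt ℂ (Gk r s) p :=
    fun r s p => ((hGkc r s).differentiable (by simp)) p
  have dE : ∀ c (p : (Fin n → ℂ) × ℂ), DifferentiableAt ℂ (fun p : (Fin n → ℂ) × ℂ => e p.1 p.2 c) p :=
    fun c p => ((he c).differentiable (by simp)) p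
  have hfw : f z0 t = w := hinv₂ w t
  -- smoothness of partial-derivative functions
  have hDq : ∀ (c : Fin n) (q : (Fin n → ℂ) × ℂ),
      ContDiff ℂ ⊤ (fun y => fderiv ℂ (F c) y q) := fun c q =>
    contDiff_fderiv_apply (F c) (hFc c) q
  -- goal-rewriting equations
  have hKr : ∀ r s : Fin n, deriv (fun τ => gk r s z0 τ) t
      = fderiv ℂ (Gk r s) (z0, t) (0, 1) := fun r s =>
    (hasDerivAt_slice (Gk r s) z0 t (dGk r s (z0, t))).deriv
  have hCr : ∀ (c : Fin n) (r : Fin n), pd r (fun z => f z t c) z0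
      = fderiv ℂ (F c) (z0, t) (Pi.single r 1, 0) := fun c r =>
    pd_slice (F c) r z0 t (dF c (z0, t))
  have hGtr : deriv (fun τ => gj a b w τ) t = fderiv ℂ Gj (w, t) (0, 1) :=
    (hasDerivAt_slice Gj w t (dGj (w, t))).deriv
  have hGcr : ∀ c : Fin n, pd c (fun z => gj a b z t) w
      = fderiv ℂ Gj (w, t) (Pi.single c 1, 0) := fun c =>
    pd_slice Gj c w t (dGj (w, t))
  have hθr : ∀ c : Fin n, deriv (fun τ => f z0 τ c) t
      = fderiv ℂ (F c) (z0, t) (0, 1) := fun c =>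
    (hasDerivAt_slice (F c) z0 t (dF c (z0, t))).deriv
  -- the Θ (time-vector-field) terms
  have hEdiff : DifferentiableAt ℂ (fun w' => e w' t) w :=
    differentiableAt_pi.2 fun r =>
      (dE r (w, t)).comp (f := fun x : Fin n → ℂ => (x, t)) w (differentiableAt_id.prodMk (differentiableAt_const t))
  have hΘ : ∀ (d : Fin n) (c : Fin n),
      pd c (fun w' => deriv (fun τ => f (e w' t) τ d) t) w
        = ∑ r, pd c (fun w' => e w' t r) w
            * fderiv ℂ (fun y => fderiv ℂ (F d) y (Pi.single r 1, 0)) (z0, t) (0, 1) := by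
    intro d c
    have h1 : (fun w' => deriv (fun τ => f (e w' t) τ d) t)
        = fun w' => fderiv ℂ (F d) (e w' t, t) ((0 : Fin n → ℂ), (1:ℂ)) :=
      funext fun w' => (hasDerivAt_slice (F d) (e w' t) t (dF d (e w' t, t))).deriv
    rw [h1]
    have hφ : DifferentiableAt ℂ
        (fun z : Fin n → ℂ => fderiv ℂ (F d) (z, t) ((0 : Fin n → ℂ), (1:ℂ))) z0 :=
      (((hDq d ((0 : Fin n → ℂ), (1:ℂ))).differentiable (by simp)) (z0, t)).comp (f := fun x : Fin n → ℂ => (x, t)) z0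
        (differentiableAt_id.prodMk (differentiableAt_const t))
    have h2 : pd c (fun w' => fderiv ℂ (F d) (e w' t, t) ((0 : Fin n → ℂ), (1:ℂ))) w
        = ∑ r, pd c (fun w' => e w' t r) w
            * pd r (fun z : Fin n → ℂ => fderiv ℂ (F d) (z, t) ((0 : Fin n → ℂ), (1:ℂ))) z0 :=
      pd_comp (fun z : Fin n → ℂ => fderiv ℂ (F d) (z, t) ((0 : Fin n → ℂ), (1:ℂ)))
        (fun w' => e w' t) w c hφ hEdiff
    rw [h2]
    refine Finset.sum_congr rfl fun r _ => ?_
    congr 1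
    have h3 : pd r (fun z : Fin n → ℂ => fderiv ℂ (F d) (z, t) ((0 : Fin n → ℂ), (1:ℂ))) z0
        = fderiv ℂ (fun y => fderiv ℂ (F d) y ((0 : Fin n → ℂ), (1:ℂ))) (z0, t)
            (Pi.single r 1, 0) :=
      pd_slice (fun y => fderiv ℂ (F d) y ((0 : Fin n → ℂ), (1:ℂ))) r z0 t
        (((hDq d ((0 : Fin n → ℂ), (1:ℂ))).differentiable (by simp)) (z0, t))
    rw [h3]
    exact snd_deriv_symm (F d) (hFc d) (z0, t) ((0 : Fin n → ℂ), (1:ℂ))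
      ((Pi.single r 1 : Fin n → ℂ), (0:ℂ))
  -- Jacobian inverse relation
  have hfdiff : DifferentiableAt ℂ (fun z => f z t) z0 :=
    differentiableAt_pi.2 fun c =>
      (dF c (z0, t)).comp (f := fun x : Fin n → ℂ => (x, t)) z0 (differentiableAt_id.prodMk (differentiableAt_const t))
  have hCE : ∀ r r', ∑ c, fderiv ℂ (F c) (z0, t) (Pi.single r 1, 0)
      * pd c (fun w' => e w' t r') w = if r' = r then 1 else 0 := by
    intro r r'
    have hφ : DifferentiableAt ℂ (fun w' => e w' t r') (f z0 t) :=
      (dE r' (f z0 t, t)).comp (f := fun x : Fin n → ℂ => (x, t)) (f z0 t) (differentiableAt_id.prodMk (differentiableAt_const t))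
    have h2 : pd r (fun z => e (f z t) t r') z0
        = ∑ c, pd r (fun z => f z t c) z0 * pd c (fun w' => e w' t r') (f z0 t) :=
      pd_comp (fun w' => e w' t r') (fun z => f z t) z0 r hφ hfdiff
    rw [hfw] at h2
    have h2' : pd r (fun z => e (f z t) t r') z0
        = ∑ c, fderiv ℂ (F c) (z0, t) (Pi.single r 1, 0) * pd c (fun w' => e w' t r') w := by
      rw [h2]
      exact Finset.sum_congr rfl fun c _ => by rw [hCr c r]
    rw [← h2']
    have hψ : (fun z => e (f z t) t r') = fun z : Fin n → ℂ => z r' :=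
      funext fun z => by rw [hinv₁ z t]
    rw [hψ]
    have hproj := (ContinuousLinearMap.proj (R := ℂ) (φ := fun _ : Fin n => ℂ) r').hasFDerivAt
      (x := z0)
    have h4 : fderiv ℂ (fun z : Fin n → ℂ => z r') z0
        = ContinuousLinearMap.proj (R := ℂ) (φ := fun _ : Fin n => ℂ) r' := hproj.fderiv
    have h3 : pd r (fun z : Fin n → ℂ => z r') z0 = (Pi.single r 1 : Fin n → ℂ) r' := by
      show fderiv ℂ (fun z : Fin n → ℂ => z r') z0 (Pi.single r 1) = _
      rw [h4]
      rfl
    rw [h3, Pi.single_apply]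
  -- the differentiated Poisson identity
  have hγ : HasDerivAt (fun τ => f z0 τ)
      (fun c => fderiv ℂ (F c) (z0, t) (0, 1)) t :=
    hasDerivAt_pi.2 fun c => hasDerivAt_slice (F c) z0 t (dF c (z0, t))
  have hcurve : HasDerivAt (fun τ : ℂ => ((f z0 τ, τ) : (Fin n → ℂ) × ℂ))
      ((fun c => fderiv ℂ (F c) (z0, t) (0, 1)), 1) t := hγ.prodMk (hasDerivAt_id t)
  have hL : HasDerivAt (fun τ => gj a b (f z0 τ) τ)
      (fderiv ℂ Gj (f z0 t, t) ((fun c => fderiv ℂ (F c) (z0, t) (0, 1)), 1)) t :=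
    (dGj (f z0 t, t)).hasFDerivAt.comp_hasDerivAt (f := fun τ : ℂ => ((f z0 τ, τ) : (Fin n → ℂ) × ℂ)) t hcurve
  rw [hfw] at hL
  have hmulA : ∀ (r : Fin n), HasDerivAt
      (fun τ => fderiv ℂ (F a) (z0, τ) ((Pi.single r 1 : Fin n → ℂ), (0:ℂ)))
      (fderiv ℂ (fun y => fderiv ℂ (F a) y (Pi.single r 1, 0)) (z0, t) (0, 1)) t := fun r =>
    hasDerivAt_slice (fun y => fderiv ℂ (F a) y ((Pi.single r 1 : Fin n → ℂ), (0:ℂ))) z0 t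
      (((hDq a ((Pi.single r 1 : Fin n → ℂ), (0:ℂ))).differentiable (by simp)) (z0, t))
  have hmulB : ∀ (s : Fin n), HasDerivAt
      (fun τ => fderiv ℂ (F b) (z0, τ) ((Pi.single s 1 : Fin n → ℂ), (0:ℂ)))
      (fderiv ℂ (fun y => fderiv ℂ (F b) y (Pi.single s 1, 0)) (z0, t) (0, 1)) t := fun s =>
    hasDerivAt_slice (fun y => fderiv ℂ (F b) y ((Pi.single s 1 : Fin n → ℂ), (0:ℂ))) z0 t
      (((hDq b ((Pi.single s 1 : Fin n → ℂ), (0:ℂ))).differentiable (by simp)) (z0, t))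
  have hR : HasDerivAt
      (fun τ => ∑ r, ∑ s, gk r s z0 τ
          * fderiv ℂ (F a) (z0, τ) ((Pi.single r 1 : Fin n → ℂ), (0:ℂ))
          * fderiv ℂ (F b) (z0, τ) ((Pi.single s 1 : Fin n → ℂ), (0:ℂ)))
      (∑ r, ∑ s,
        ((fderiv ℂ (Gk r s) (z0, t) (0, 1) * fderiv ℂ (F a) (z0, t) (Pi.single r 1, 0)
            + gk r s z0 t * fderiv ℂ (fun y => fderiv ℂ (F a) y (Pi.single r 1, 0)) (z0, t) (0, 1))
          * fderiv ℂ (F b) (z0, t) (Pi.single s 1, 0)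
          + gk r s z0 t * fderiv ℂ (F a) (z0, t) (Pi.single r 1, 0)
            * fderiv ℂ (fun y => fderiv ℂ (F b) y (Pi.single s 1, 0)) (z0, t) (0, 1))) t :=
    HasDerivAt.fun_sum fun r _ => HasDerivAt.fun_sum fun s _ =>
      (((hasDerivAt_slice (Gk r s) z0 t (dGk r s (z0, t))).mul (hmulA r)).mul (hmulB s))
  have hfun : (fun τ => gj a b (f z0 τ) τ)
      = fun τ => ∑ r, ∑ s, gk r s z0 τ
          * fderiv ℂ (F a) (z0, τ) ((Pi.single r 1 : Fin n → ℂ), (0:ℂ))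
          * fderiv ℂ (F b) (z0, τ) ((Pi.single s 1 : Fin n → ℂ), (0:ℂ)) := by
    funext τ
    rw [hPoisson a b z0 τ]
    refine Finset.sum_congr rfl fun r _ => Finset.sum_congr rfl fun s _ => ?_
    rw [show pd r (fun w => f w τ a) z0
          = fderiv ℂ (F a) (z0, τ) ((Pi.single r 1 : Fin n → ℂ), (0:ℂ)) from
        pd_slice (F a) r z0 τ (dF a (z0, τ)),
      show pd s (fun w => f w τ b) z0
          = fderiv ℂ (F b) (z0, τ) ((Pi.single s 1 : Fin n → ℂ), (0:ℂ)) from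
        pd_slice (F b) s z0 τ (dF b (z0, τ))]
  have hR' : HasDerivAt (fun τ => gj a b (f z0 τ) τ)
      (∑ r, ∑ s,
        ((fderiv ℂ (Gk r s) (z0, t) (0, 1) * fderiv ℂ (F a) (z0, t) (Pi.single r 1, 0)
            + gk r s z0 t * fderiv ℂ (fun y => fderiv ℂ (F a) y (Pi.single r 1, 0)) (z0, t) (0, 1))
          * fderiv ℂ (F b) (z0, t) (Pi.single s 1, 0)
          + gk r s z0 t * fderiv ℂ (F a) (z0, t) (Pi.single r 1, 0)
            * fderiv ℂ (fun y => fderiv ℂ (F b) y (Pi.single s 1, 0)) (z0, t) (0, 1))) t := by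
    rw [hfun]; exact hR
  have hraw : fderiv ℂ Gj (w, t) ((fun c => fderiv ℂ (F c) (z0, t) (0, 1)), 1)
      = ∑ r, ∑ s,
        ((fderiv ℂ (Gk r s) (z0, t) (0, 1) * fderiv ℂ (F a) (z0, t) (Pi.single r 1, 0)
            + gk r s z0 t * fderiv ℂ (fun y => fderiv ℂ (F a) y (Pi.single r 1, 0)) (z0, t) (0, 1))
          * fderiv ℂ (F b) (z0, t) (Pi.single s 1, 0)
          + gk r s z0 t * fderiv ℂ (F a) (z0, t) (Pi.single r 1, 0)
            * fderiv ℂ (fun y => fderiv ℂ (F b) y (Pi.single s 1, 0)) (z0, t) (0, 1)) :=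
    hL.unique hR'
  have hlhs := clm_decomp (fderiv ℂ Gj (w, t)) (fun c => fderiv ℂ (F c) (z0, t) (0, 1)) 1
  rw [one_mul] at hlhs
  have hstar : fderiv ℂ Gj (w, t) (0, 1)
      + (∑ c, fderiv ℂ Gj (w, t) (Pi.single c 1, 0) * fderiv ℂ (F c) (z0, t) (0, 1))
      = (∑ r, ∑ s, fderiv ℂ (Gk r s) (z0, t) (0, 1)
          * fderiv ℂ (F a) (z0, t) (Pi.single r 1, 0)
          * fderiv ℂ (F b) (z0, t) (Pi.single s 1, 0))
        + (∑ r, ∑ s, gk r s z0 t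
            * fderiv ℂ (fun y => fderiv ℂ (F a) y (Pi.single r 1, 0)) (z0, t) (0, 1)
            * fderiv ℂ (F b) (z0, t) (Pi.single s 1, 0))
        + (∑ r, ∑ s, gk r s z0 t
            * fderiv ℂ (F a) (z0, t) (Pi.single r 1, 0)
            * fderiv ℂ (fun y => fderiv ℂ (F b) y (Pi.single s 1, 0)) (z0, t) (0, 1)) := by
    have comm : (∑ c, fderiv ℂ Gj (w, t) (Pi.single c 1, 0) * fderiv ℂ (F c) (z0, t) (0, 1))
        = ∑ c, fderiv ℂ (F c) (z0, t) (0, 1) * fderiv ℂ Gj (w, t) (Pi.single c 1, 0) :=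
      Finset.sum_congr rfl fun c _ => mul_comm _ _
    have split : (∑ r, ∑ s,
        ((fderiv ℂ (Gk r s) (z0, t) (0, 1) * fderiv ℂ (F a) (z0, t) (Pi.single r 1, 0)
            + gk r s z0 t * fderiv ℂ (fun y => fderiv ℂ (F a) y (Pi.single r 1, 0)) (z0, t) (0, 1))
          * fderiv ℂ (F b) (z0, t) (Pi.single s 1, 0)
          + gk r s z0 t * fderiv ℂ (F a) (z0, t) (Pi.single r 1, 0)
            * fderiv ℂ (fun y => fderiv ℂ (F b) y (Pi.single s 1, 0)) (z0, t) (0, 1)))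
        = (∑ r, ∑ s, fderiv ℂ (Gk r s) (z0, t) (0, 1)
            * fderiv ℂ (F a) (z0, t) (Pi.single r 1, 0)
            * fderiv ℂ (F b) (z0, t) (Pi.single s 1, 0))
          + (∑ r, ∑ s, gk r s z0 t
              * fderiv ℂ (fun y => fderiv ℂ (F a) y (Pi.single r 1, 0)) (z0, t) (0, 1)
              * fderiv ℂ (F b) (z0, t) (Pi.single s 1, 0))
          + (∑ r, ∑ s, gk r s z0 t
              * fderiv ℂ (F a) (z0, t) (Pi.single r 1, 0)
              * fderiv ℂ (fun y => fderiv ℂ (F b) y (Pi.single s 1, 0)) (z0, t) (0, 1)) := by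
      have h1 : ∀ r s : Fin n,
          (fderiv ℂ (Gk r s) (z0, t) (0, 1) * fderiv ℂ (F a) (z0, t) (Pi.single r 1, 0)
            + gk r s z0 t * fderiv ℂ (fun y => fderiv ℂ (F a) y (Pi.single r 1, 0)) (z0, t) (0, 1))
          * fderiv ℂ (F b) (z0, t) (Pi.single s 1, 0)
          + gk r s z0 t * fderiv ℂ (F a) (z0, t) (Pi.single r 1, 0)
            * fderiv ℂ (fun y => fderiv ℂ (F b) y (Pi.single s 1, 0)) (z0, t) (0, 1)
          = fderiv ℂ (Gk r s) (z0, t) (0, 1) * fderiv ℂ (F a) (z0, t) (Pi.single r 1, 0)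
              * fderiv ℂ (F b) (z0, t) (Pi.single s 1, 0)
            + gk r s z0 t * fderiv ℂ (fun y => fderiv ℂ (F a) y (Pi.single r 1, 0)) (z0, t) (0, 1)
              * fderiv ℂ (F b) (z0, t) (Pi.single s 1, 0)
            + gk r s z0 t * fderiv ℂ (F a) (z0, t) (Pi.single r 1, 0)
              * fderiv ℂ (fun y => fderiv ℂ (F b) y (Pi.single s 1, 0)) (z0, t) (0, 1) :=
        fun r s => by ring
      simp only [h1, Finset.sum_add_distrib]
    rw [comm]
    exact (hlhs.symm.trans hraw).trans split
  -- the two Poisson-transport identities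
  have hgjP : ∀ c d : Fin n, gj c d w t
      = ∑ r, ∑ s, gk r s z0 t * fderiv ℂ (F c) (z0, t) (Pi.single r 1, 0)
          * fderiv ℂ (F d) (z0, t) (Pi.single s 1, 0) := by
    intro c d
    have h := hPoisson c d z0 t
    rw [hfw] at h
    rw [h]
    exact Finset.sum_congr rfl fun r _ => Finset.sum_congr rfl fun s _ => by
      rw [show pd r (fun w => f w t c) z0
            = fderiv ℂ (F c) (z0, t) ((Pi.single r 1 : Fin n → ℂ), (0:ℂ)) from hCr c r,
        show pd s (fun w => f w t d) z0
            = fderiv ℂ (F d) (z0, t) ((Pi.single s 1 : Fin n → ℂ), (0:ℂ)) from hCr d s]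
  have hI : (∑ c, gj c b w t * ∑ r, pd c (fun w' => e w' t r) w
        * fderiv ℂ (fun y => fderiv ℂ (F a) y (Pi.single r 1, 0)) (z0, t) (0, 1))
      = ∑ r, ∑ s, gk r s z0 t
          * fderiv ℂ (fun y => fderiv ℂ (F a) y (Pi.single r 1, 0)) (z0, t) (0, 1)
          * fderiv ℂ (F b) (z0, t) (Pi.single s 1, 0) := by
    have := sums_alg (fun r s => gk r s z0 t)
      (fun c r => fderiv ℂ (F c) (z0, t) (Pi.single r 1, 0))
      (fun c r => pd c (fun w' => e w' t r) w)
      (fun s => fderiv ℂ (F b) (z0, t) (Pi.single s 1, 0))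
      (fun r => fderiv ℂ (fun y => fderiv ℂ (F a) y (Pi.single r 1, 0)) (z0, t) (0, 1))
      hCE
    rw [← this]
    exact Finset.sum_congr rfl fun c _ => by rw [hgjP c b]
  have hII : (∑ c, gj a c w t * ∑ s, pd c (fun w' => e w' t s) w
        * fderiv ℂ (fun y => fderiv ℂ (F b) y (Pi.single s 1, 0)) (z0, t) (0, 1))
      = ∑ r, ∑ s, gk r s z0 t
          * fderiv ℂ (F a) (z0, t) (Pi.single r 1, 0)
          * fderiv ℂ (fun y => fderiv ℂ (F b) y (Pi.single s 1, 0)) (z0, t) (0, 1) := by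
    have := sums_alg₂ (fun r s => gk r s z0 t)
      (fun c s => fderiv ℂ (F c) (z0, t) (Pi.single s 1, 0))
      (fun c s => pd c (fun w' => e w' t s) w)
      (fun r => fderiv ℂ (F a) (z0, t) (Pi.single r 1, 0))
      (fun s => fderiv ℂ (fun y => fderiv ℂ (F b) y (Pi.single s 1, 0)) (z0, t) (0, 1))
      hCE
    rw [← this]
    exact Finset.sum_congr rfl fun c _ => by rw [hgjP a c]
  -- rewrite the goal into canonical atoms and conclude
  simp only [hKr, hCr, hGtr, hGcr, hθr, hΘ a, hΘ b]
  rw [Finset.sum_add_distrib]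
  linear_combination hI + hII - hstar
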